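/- Let G be a graph with m edges on vertex set V of size n, where each vertex v joins T independently with probability q = sqrt(n/m) (assume m >= n). After removing T ∪ N(T), the expected number of remaining edges is at most (1/(2e)) * sqrt(n * m). -/

import Mathlib

open Finset

private lemma prob_allFalse {V : Type*} [Fintype V] [DecidableEq V] (q : ℝ) (hq : q + (1 - q) = 1)
    (S : Finset V) :
    ∑ ω : V → Bool, (∏ v, (if ω v then q else 1 - q)) *
      (if ∀ v ∈ S, ω v = false then (1 : ℝ) else 0) = (1 - q) ^ S.card := by
  have key : ∀ ω : V → Bool,
      (∏ v, (if ω v then q else 1 - q)) * (if ∀ v ∈ S, ω v = false then (1 : ℝ) else 0)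
      = ∏ v, ((if ω v then q else 1 - q) *
          (if v ∈ S then (if ω v then (0 : ℝ) else 1) else 1)) := by
    intro ω
    rw [Finset.prod_mul_distrib]
    congr 1
    by_cases h : ∀ v ∈ S, ω v = false
    · rw [if_pos h, eq_comm, Finset.prod_eq_one]
      intro v _
      by_cases hv : v ∈ S
      · simp [hv, h v hv]
      · simp [hv]
    · rw [if_neg h]
      push_neg at h
      obtain ⟨v, hvS, hv⟩ := h
      refine (Finset.prod_eq_zero (mem_univ v) ?_).symm
      have : ω v = true := by simpa using hv
      simp [hvS, this]
  simp_rw [key]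
  have hswap := Finset.sum_prod_piFinset (Finset.univ : Finset Bool)
    (fun v b => (if b then q else 1 - q) * (if v ∈ S then (if b then (0 : ℝ) else 1) else 1))
  rw [Fintype.piFinset_univ] at hswap
  rw [hswap]
  have : ∀ v : V, (∑ b : Bool, (if b then q else 1 - q) *
      (if v ∈ S then (if b then (0 : ℝ) else 1) else 1)) = if v ∈ S then 1 - q else 1 := by
    intro v
    by_cases hv : v ∈ S <;> simp [hv, Fintype.sum_bool, hq]
  simp_rw [this]
  rw [Finset.prod_ite_mem, univ_inter, Finset.prod_const]

theorem expected_remaining_edges {V : Type*} [Fintype V] [DecidableEq V]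
    (G : SimpleGraph V) [DecidableRel G.Adj]
    (n m : ℕ) (hn : n = Fintype.card V) (hm : m = G.edgeFinset.card)
    (h1 : 1 ≤ n) (hmn : n ≤ m)
    (q : ℝ) (hq : q = Real.sqrt ((n : ℝ) / m))
    (P : (V → Bool) → ℝ) (hP : ∀ ω, P ω = ∏ v, (if ω v then q else 1 - q))
    (rem : (V → Bool) → ℕ)
    (hrem : ∀ ω, rem ω = (G.edgeFinset.filter
      (fun e => ∀ v ∈ e, ω v = false ∧ ∀ u : V, G.Adj v u → ω u = false)).card) :
    ∑ ω : V → Bool, P ω * rem ω ≤ (1 / (2 * Real.exp 1)) * Real.sqrt ((n : ℝ) * m) := by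
  have hm1 : 1 ≤ m := le_trans h1 hmn
  have hnpos : (0 : ℝ) < n := by exact_mod_cast h1
  have hmpos : (0 : ℝ) < m := by exact_mod_cast hm1
  have hq0 : 0 < q := by
    rw [hq]; exact Real.sqrt_pos.mpr (div_pos hnpos hmpos)
  have hq1 : q ≤ 1 := by
    rw [hq, show (1 : ℝ) = Real.sqrt 1 by simp]
    exact Real.sqrt_le_sqrt (by rw [div_le_one hmpos]; exact_mod_cast hmn)
  have hPnn : ∀ ω, 0 ≤ P ω := by
    intro ω; rw [hP]
    apply Finset.prod_nonneg
    intro v _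
    split <;> linarith
  set ind : Sym2 V → (V → Bool) → ℝ := fun e ω =>
    if (∀ v ∈ e, ω v = false ∧ ∀ u : V, G.Adj v u → ω u = false) then 1 else 0 with hind
  set p : Sym2 V → ℝ := fun e => ∑ ω : V → Bool, P ω * ind e ω with hp
  -- Step 1: linearity of expectation
  have step1 : ∑ ω : V → Bool, P ω * rem ω = ∑ e ∈ G.edgeFinset, p e := by
    have : ∀ ω : V → Bool, P ω * rem ω = ∑ e ∈ G.edgeFinset, P ω * ind e ω := by
      intro ω
      rw [← Finset.mul_sum]
      congr 1
      rw [hrem]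
      rw [← Finset.sum_boole]
    simp_rw [this]
    exact Finset.sum_comm
  -- per-dart bound
  have dartBound : ∀ d : G.Dart, p d.edge ≤ (1 - q) ^ G.degree d.fst := by
    intro d
    have hfst : d.fst ∈ d.edge := by
      rw [SimpleGraph.Dart.edge]
      exact Sym2.mem_mk_left _ _
    have hle : p d.edge ≤ ∑ ω : V → Bool, P ω *
        (if ∀ v ∈ G.neighborFinset d.fst, ω v = false then (1 : ℝ) else 0) := by
      apply Finset.sum_le_sum
      intro ω _
      apply mul_le_mul_of_nonneg_left _ (hPnn ω)
      simp only [hind]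
      by_cases h : ∀ v ∈ d.edge, ω v = false ∧ ∀ u : V, G.Adj v u → ω u = false
      · rw [if_pos h, if_pos]
        intro u hu
        rw [SimpleGraph.mem_neighborFinset] at hu
        exact (h d.fst hfst).2 u hu
      · rw [if_neg h]
        split <;> norm_num
    calc p d.edge ≤ _ := hle
      _ = (1 - q) ^ (G.neighborFinset d.fst).card := by
          simp_rw [hP]
          exact prob_allFalse q (by ring) _
      _ = (1 - q) ^ G.degree d.fst := by
          rw [SimpleGraph.card_neighborFinset_eq_degree]
  -- sum over darts equals twice the sum over edges
  have hpnn : ∀ e, 0 ≤ p e := by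
    intro e
    apply Finset.sum_nonneg
    intro ω _
    apply mul_nonneg (hPnn ω)
    simp only [hind]
    split <;> norm_num
  have darts_eq : ∑ d : G.Dart, p d.edge = 2 * ∑ e ∈ G.edgeFinset, p e := by
    rw [← Finset.sum_fiberwise_of_maps_to (g := fun d : G.Dart => d.edge)
      (t := G.edgeFinset) (fun d _ => by rw [SimpleGraph.mem_edgeFinset]; exact d.edge_mem),
      Finset.mul_sum]
    apply Finset.sum_congr rfl
    intro e he
    have : ∀ d ∈ Finset.univ.filter (fun d : G.Dart => d.edge = e), p d.edge = p e := by
      intro d hd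
      rw [(Finset.mem_filter.mp hd).2]
    rw [Finset.sum_congr rfl this, Finset.sum_const, nsmul_eq_mul,
      G.dart_edge_fiber_card e (SimpleGraph.mem_edgeFinset.mp he)]
    norm_num
  have darts_deg : ∑ d : G.Dart, ((1 - q) ^ G.degree d.fst : ℝ)
      = ∑ v : V, (G.degree v : ℝ) * (1 - q) ^ G.degree v := by
    rw [← Finset.sum_fiberwise_of_maps_to (g := fun d : G.Dart => d.fst)
      (t := Finset.univ) (fun d _ => Finset.mem_univ _)]
    apply Finset.sum_congr rfl
    intro v _
    have : ∀ d ∈ Finset.univ.filter (fun d : G.Dart => d.fst = v),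
        ((1 - q) ^ G.degree d.fst : ℝ) = (1 - q) ^ G.degree v := by
      intro d hd
      rw [(Finset.mem_filter.mp hd).2]
    rw [Finset.sum_congr rfl this, Finset.sum_const, nsmul_eq_mul,
      G.dart_fst_fiber_card_eq_degree]
  -- per-vertex analytic bound
  have vertBound : ∀ v : V, (G.degree v : ℝ) * (1 - q) ^ G.degree v
      ≤ 1 / (q * Real.exp 1) := by
    intro v
    set d : ℕ := G.degree v
    have h1q : (0 : ℝ) ≤ 1 - q := by linarith
    have hexp : (1 - q : ℝ) ^ d ≤ Real.exp (-(q * d)) := by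
      calc (1 - q : ℝ) ^ d ≤ (Real.exp (-q)) ^ d :=
            pow_le_pow_left₀ h1q (by linarith [Real.add_one_le_exp (-q)]) d
        _ = Real.exp (-(q * d)) := by
            rw [← Real.exp_nat_mul]; ring_nf
    have key : q * d * Real.exp (-(q * d)) ≤ 1 / Real.exp 1 := by
      have h := Real.add_one_le_exp (q * d - 1)
      have hpos : (0 : ℝ) < Real.exp (-(q * d)) := Real.exp_pos _
      have : q * d ≤ Real.exp (q * d) / Real.exp 1 := by
        rw [← Real.exp_sub]
        linarith
      calc q * d * Real.exp (-(q * d))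
          ≤ (Real.exp (q * d) / Real.exp 1) * Real.exp (-(q * d)) := by
            apply mul_le_mul_of_nonneg_right this (le_of_lt hpos)
        _ = 1 / Real.exp 1 := by
            rw [Real.exp_neg]
            field_simp
    have hd0 : (0 : ℝ) ≤ (d : ℝ) := Nat.cast_nonneg d
    have := mul_le_mul_of_nonneg_left hexp hd0
    have h2 : (d : ℝ) * Real.exp (-(q * d)) ≤ 1 / (q * Real.exp 1) := by
      rw [le_div_iff₀ (by positivity)]
      calc (d : ℝ) * Real.exp (-(q * d)) * (q * Real.exp 1)
          = (q * d * Real.exp (-(q * d))) * Real.exp 1 := by ring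
        _ ≤ (1 / Real.exp 1) * Real.exp 1 := by
            apply mul_le_mul_of_nonneg_right key (le_of_lt (Real.exp_pos 1))
        _ = 1 := by field_simp
    linarith
  -- combine
  have main : 2 * ∑ e ∈ G.edgeFinset, p e ≤ (n : ℝ) / (q * Real.exp 1) := by
    rw [← darts_eq]
    calc ∑ d : G.Dart, p d.edge ≤ ∑ d : G.Dart, ((1 - q) ^ G.degree d.fst : ℝ) :=
          Finset.sum_le_sum (fun d _ => dartBound d)
      _ = ∑ v : V, (G.degree v : ℝ) * (1 - q) ^ G.degree v := darts_deg
      _ ≤ ∑ v : V, 1 / (q * Real.exp 1) := Finset.sum_le_sum (fun v _ => vertBound v)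
      _ = (n : ℝ) / (q * Real.exp 1) := by
          rw [Finset.sum_const, nsmul_eq_mul, Finset.card_univ, ← hn]
          ring
  -- final arithmetic
  have hsn : Real.sqrt n * Real.sqrt n = (n : ℝ) := Real.mul_self_sqrt hnpos.le
  have hsnpos : (0 : ℝ) < Real.sqrt n := Real.sqrt_pos.mpr hnpos
  have hsmpos : (0 : ℝ) < Real.sqrt m := Real.sqrt_pos.mpr hmpos
  have hnq : (n : ℝ) / q = Real.sqrt ((n : ℝ) * m) := by
    rw [hq, Real.sqrt_div hnpos.le, Real.sqrt_mul hnpos.le,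
      div_eq_iff (ne_of_gt (div_pos hsnpos hsmpos))]
    field_simp
    linear_combination (-1 : ℝ) * hsn
  have hfin : (n : ℝ) / (q * Real.exp 1) / 2 = (1 / (2 * Real.exp 1)) * Real.sqrt ((n : ℝ) * m) := by
    rw [← hnq]
    have he : (0 : ℝ) < Real.exp 1 := Real.exp_pos 1
    field_simp
  rw [step1, ← hfin]
  linarith
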